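/- Let m be a positive integer and (s_i)_{i=1}^m, (a_i)_{i=1}^m be sequences of positive reals. The optimization problem of minimizing ∑_{i=1}^m s_i/λ_i over sequences (λ_i)_{i=1}^m of positive reals subject to ∑_{i=1}^j a_i ≤ ∑_{i=1}^j λ_i for all j = 1,…,m−1 and ∑_{i=1}^m a_i = ∑_{i=1}^m λ_i admits a unique optimal solution. -/

import Mathlib

open Finset

private lemma mid_le (s x y : ℝ) (hs : 0 < s) (hx : 0 < x) (hy : 0 < y) :
    s / ((x + y) / 2) ≤ (s / x + s / y) / 2 := by
  rw [div_add_div _ _ hx.ne' hy.ne', div_div, div_div_eq_mul_div,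
    div_le_div_iff₀ (by positivity) (by positivity)]
  nlinarith [sq_nonneg (x - y)]

private lemma mid_lt (s x y : ℝ) (hs : 0 < s) (hx : 0 < x) (hy : 0 < y) (hne : x ≠ y) :
    s / ((x + y) / 2) < (s / x + s / y) / 2 := by
  rw [div_add_div _ _ hx.ne' hy.ne', div_div, div_div_eq_mul_div,
    div_lt_div_iff₀ (by positivity) (by positivity)]
  have hxy : x - y ≠ 0 := sub_ne_zero.mpr hne
  have : (x - y)^2 > 0 := by positivity
  nlinarith

private def Feas (m : ℕ) (a lam : Fin m → ℝ) : Prop :=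
  (∀ i, 0 < lam i) ∧
    (∀ j : ℕ, j < m →
      ∑ i ∈ univ.filter (fun i : Fin m => (i : ℕ) < j), a i ≤
        ∑ i ∈ univ.filter (fun i : Fin m => (i : ℕ) < j), lam i) ∧
    ∑ i, a i = ∑ i, lam i

private lemma existence (m : ℕ) (hm : 0 < m) (s a : Fin m → ℝ)
    (hs : ∀ i, 0 < s i) (ha : ∀ i, 0 < a i) :
    ∃ lam, Feas m a lam ∧ ∀ mu, Feas m a mu →
      ∑ i, s i / lam i ≤ ∑ i, s i / mu i := by
  haveI : Nonempty (Fin m) := ⟨⟨0, hm⟩⟩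
  set T := ∑ i, a i with hT
  have hT0 : 0 < T := Finset.sum_pos (fun i _ => ha i) univ_nonempty
  set c := ∑ i, s i / a i with hc
  have hc0 : 0 < c := Finset.sum_pos (fun i _ => div_pos (hs i) (ha i)) univ_nonempty
  set lo : Fin m → ℝ := fun i => s i / c with hlo_def
  have hlo : ∀ i, 0 < lo i := fun i => div_pos (hs i) hc0
  set C : Set (Fin m → ℝ) := {l | (∀ j : ℕ, j < m →
      ∑ i ∈ univ.filter (fun i : Fin m => (i : ℕ) < j), a i ≤
        ∑ i ∈ univ.filter (fun i : Fin m => (i : ℕ) < j), l i) ∧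
    ∑ i, a i = ∑ i, l i} with hC_def
  set K := Set.Icc lo (fun _ => T) ∩ C with hK_def
  have hCclosed : IsClosed C := by
    have h1 : IsClosed {l : Fin m → ℝ | ∀ j : ℕ, j < m →
        ∑ i ∈ univ.filter (fun i : Fin m => (i : ℕ) < j), a i ≤
          ∑ i ∈ univ.filter (fun i : Fin m => (i : ℕ) < j), l i} := by
      have heq : {l : Fin m → ℝ | ∀ j : ℕ, j < m →
          ∑ i ∈ univ.filter (fun i : Fin m => (i : ℕ) < j), a i ≤
            ∑ i ∈ univ.filter (fun i : Fin m => (i : ℕ) < j), l i} =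
          ⋂ j ∈ Set.Iio m, {l : Fin m → ℝ |
            ∑ i ∈ univ.filter (fun i : Fin m => (i : ℕ) < j), a i ≤
              ∑ i ∈ univ.filter (fun i : Fin m => (i : ℕ) < j), l i} := by
        ext l; simp [Set.mem_iInter]
      rw [heq]
      exact isClosed_biInter fun j _ => isClosed_le continuous_const
        (continuous_finset_sum _ fun i _ => continuous_apply i)
    have h2 : IsClosed {l : Fin m → ℝ | ∑ i, a i = ∑ i, l i} :=
      isClosed_eq continuous_const (continuous_finset_sum _ fun i _ => continuous_apply i)
    exact h1.inter h2
  have hKcomp : IsCompact K := isCompact_Icc.inter_right hCclosed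
  have hmemK : ∀ mu, Feas m a mu → (∑ i, s i / mu i) ≤ c → mu ∈ K := by
    intro mu hmu hfmu
    refine ⟨⟨fun i => ?_, fun i => ?_⟩, hmu.2⟩
    · have h1 : s i / mu i ≤ ∑ i, s i / mu i :=
        Finset.single_le_sum (fun j _ => le_of_lt (div_pos (hs j) (hmu.1 j))) (mem_univ i)
      have h2 : s i / mu i ≤ c := h1.trans hfmu
      have h3 : s i ≤ c * mu i := by
        rw [div_le_iff₀ (hmu.1 i)] at h2; linarith [h2]
      simpa [hlo_def, div_le_iff₀ hc0, mul_comm] using h3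
    · calc mu i ≤ ∑ j, mu j :=
            Finset.single_le_sum (fun j _ => le_of_lt (hmu.1 j)) (mem_univ i)
        _ = T := (hmu.2.2).symm
  have haFeas : Feas m a a := ⟨ha, fun j _ => le_refl _, rfl⟩
  have haK : a ∈ K := hmemK a haFeas (le_refl c)
  have hKne : K.Nonempty := ⟨a, haK⟩
  have hcont : ContinuousOn (fun l : Fin m → ℝ => ∑ i, s i / l i) K := by
    apply continuousOn_finset_sum
    intro i _
    apply ContinuousOn.div continuousOn_const (continuous_apply i).continuousOn
    intro l hl
    exact ne_of_gt (lt_of_lt_of_le (hlo i) (hl.1.1 i))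
  obtain ⟨lam, hlamK, hmin⟩ := hKcomp.exists_isMinOn hKne hcont
  have hlamFeas : Feas m a lam :=
    ⟨fun i => lt_of_lt_of_le (hlo i) (hlamK.1.1 i), hlamK.2⟩
  refine ⟨lam, hlamFeas, fun mu hmu => ?_⟩
  by_cases h : (∑ i, s i / mu i) ≤ c
  · exact hmin (hmemK mu hmu h)
  · exact le_trans (hmin haK) (le_of_lt (not_le.mp h))

private lemma uniqueness (m : ℕ) (s a lam mu : Fin m → ℝ)
    (hs : ∀ i, 0 < s i)
    (hlamF : Feas m a lam) (hmuF : Feas m a mu)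
    (hopt : ∀ nu, Feas m a nu → ∑ i, s i / lam i ≤ ∑ i, s i / nu i)
    (heq : ∑ i, s i / lam i = ∑ i, s i / mu i) :
    mu = lam := by
  by_contra hne
  obtain ⟨i₀, hi₀⟩ := Function.ne_iff.mp hne
  set nu : Fin m → ℝ := fun i => (lam i + mu i) / 2 with hnu_def
  have hnuF : Feas m a nu := by
    refine ⟨fun i => by have := hlamF.1 i; have := hmuF.1 i; positivity, fun j hj => ?_, ?_⟩
    · have h1 := hlamF.2.1 j hj
      have h2 := hmuF.2.1 j hj
      have h3 : ∑ i ∈ univ.filter (fun i : Fin m => (i : ℕ) < j), nu i =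
          ((∑ i ∈ univ.filter (fun i : Fin m => (i : ℕ) < j), lam i) +
           ∑ i ∈ univ.filter (fun i : Fin m => (i : ℕ) < j), mu i) / 2 := by
        rw [← Finset.sum_add_distrib, Finset.sum_div]
      rw [h3]; linarith
    · have h3 : ∑ i, nu i = ((∑ i, lam i) + ∑ i, mu i) / 2 := by
        rw [← Finset.sum_add_distrib, Finset.sum_div]
      rw [h3, ← hlamF.2.2, ← hmuF.2.2]; ring
  have hlt : ∑ i, s i / nu i < ∑ i, (s i / lam i + s i / mu i) / 2 := by
    apply Finset.sum_lt_sum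
    · intro i _
      exact mid_le (s i) (lam i) (mu i) (hs i) (hlamF.1 i) (hmuF.1 i)
    · exact ⟨i₀, mem_univ i₀,
        mid_lt (s i₀) (lam i₀) (mu i₀) (hs i₀) (hlamF.1 i₀) (hmuF.1 i₀) (Ne.symm hi₀)⟩
  have hrhs : ∑ i, (s i / lam i + s i / mu i) / 2 =
      ((∑ i, s i / lam i) + ∑ i, s i / mu i) / 2 := by
    rw [← Finset.sum_add_distrib, Finset.sum_div]
  have hge := hopt nu hnuF
  rw [hrhs, ← heq] at hlt
  linarith

/-- The primal optimization problem: minimize `∑ i, s i / λ i` over positive sequences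
`λ` whose partial sums dominate those of `a` and with equal total sum. It admits a
unique optimal solution. -/
theorem stmt0 (m : ℕ) (hm : 0 < m) (s a : Fin m → ℝ)
    (hs : ∀ i, 0 < s i) (ha : ∀ i, 0 < a i) :
    ∃! lam : Fin m → ℝ,
      ((∀ i, 0 < lam i) ∧
        (∀ j : ℕ, j < m →
          ∑ i ∈ univ.filter (fun i : Fin m => (i : ℕ) < j), a i ≤
            ∑ i ∈ univ.filter (fun i : Fin m => (i : ℕ) < j), lam i) ∧
        ∑ i, a i = ∑ i, lam i) ∧
      (∀ mu : Fin m → ℝ,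
        ((∀ i, 0 < mu i) ∧
          (∀ j : ℕ, j < m →
            ∑ i ∈ univ.filter (fun i : Fin m => (i : ℕ) < j), a i ≤
              ∑ i ∈ univ.filter (fun i : Fin m => (i : ℕ) < j), mu i) ∧
          ∑ i, a i = ∑ i, mu i) →
        ∑ i, s i / lam i ≤ ∑ i, s i / mu i) := by
  obtain ⟨lam, hlamF, hopt⟩ := existence m hm s a hs ha
  refine ⟨lam, ⟨hlamF, fun mu hmu => hopt mu hmu⟩, ?_⟩
  rintro mu ⟨hmuF, hmuopt⟩
  exact uniqueness m s a lam mu hs hlamF hmuF hopt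
    (le_antisymm (hopt mu hmuF) (hmuopt lam hlamF))
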